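/- Let γ > 0 and σ ∈ ℝ, and let (X, Y) solve the SIR system X'(s) = -γ σ X(s) Y(s), Y'(s) = γ σ X(s) Y(s) - γ Y(s) on [t₀, t₁] with X(s) > 0 and Y(s) > 0 for all s. Let (u, v) solve the linearized system u'(s) = -γ σ (Y(s) u(s) + X(s) v(s)), v'(s) = γ σ Y(s) u(s) + γ (σ X(s) - 1) v(s) with u(t₀) = 1 and v(t₀) = -1. Then for all s ∈ [t₀, t₁]: u(s) = X(s)/X(t₀) + γ σ (X(s) Y(s)/X(t₀)) ∫_{t₀}^{s} X(r)/Y(r) dr, v(s) = -X(s)/X(t₀) + γ ((1 - σ X(s)) Y(s)/X(t₀)) ∫_{t₀}^{s} X(r)/Y(r) dr, and u(s) + v(s) = γ (Y(s)/X(t₀)) ∫_{t₀}^{s} X(r)/Y(r) dr. -/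

import Mathlib

open Set intervalIntegral

private lemma const_of_deriv_zero {f : ℝ → ℝ} {a b : ℝ}
    (hd : ∀ x ∈ Icc a b, HasDerivWithinAt f 0 (Icc a b) x) :
    ∀ x ∈ Icc a b, f x = f a := by
  apply constant_of_has_deriv_right_zero
  · exact fun x hx => (hd x hx).continuousWithinAt
  · intro x hx
    exact (hd x ⟨hx.1, hx.2.le⟩).mono_of_mem_nhdsWithin (Icc_mem_nhdsGE_of_mem hx)

/-- Explicit formulas for the solutions `(u, v)` of the variational (linearized)
equations of the SIR system with constant reproduction number `σ`, with initial data
`u(t₀) = 1`, `v(t₀) = -1`. -/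
theorem variational_solution_formulas
    (γ σ t₀ t₁ : ℝ) (hγ : 0 < γ) (ht : t₀ ≤ t₁)
    (X Y u v : ℝ → ℝ)
    (hX : ∀ s ∈ Icc t₀ t₁, HasDerivWithinAt X (-γ * σ * X s * Y s) (Icc t₀ t₁) s)
    (hY : ∀ s ∈ Icc t₀ t₁,
      HasDerivWithinAt Y (γ * σ * X s * Y s - γ * Y s) (Icc t₀ t₁) s)
    (hXpos : ∀ s ∈ Icc t₀ t₁, 0 < X s)
    (hYpos : ∀ s ∈ Icc t₀ t₁, 0 < Y s)
    (hu : ∀ s ∈ Icc t₀ t₁,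
      HasDerivWithinAt u (-γ * σ * (Y s * u s + X s * v s)) (Icc t₀ t₁) s)
    (hv : ∀ s ∈ Icc t₀ t₁,
      HasDerivWithinAt v (γ * σ * Y s * u s + γ * (σ * X s - 1) * v s) (Icc t₀ t₁) s)
    (hu0 : u t₀ = 1) (hv0 : v t₀ = -1) :
    ∀ s ∈ Icc t₀ t₁,
      u s = X s / X t₀ + γ * σ * (X s * Y s / X t₀) * ∫ r in t₀..s, X r / Y r ∧
      v s = -(X s / X t₀)
        + γ * ((1 - σ * X s) * Y s / X t₀) * ∫ r in t₀..s, X r / Y r ∧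
      u s + v s = γ * (Y s / X t₀) * ∫ r in t₀..s, X r / Y r := by
  have ht0 : t₀ ∈ Icc t₀ t₁ := ⟨le_rfl, ht⟩
  have hXne : ∀ s ∈ Icc t₀ t₁, X s ≠ 0 := fun s hs => (hXpos s hs).ne'
  have hYne : ∀ s ∈ Icc t₀ t₁, Y s ≠ 0 := fun s hs => (hYpos s hs).ne'
  -- continuity
  have hXc : ContinuousOn X (Icc t₀ t₁) := fun s hs => (hX s hs).continuousWithinAt
  have hYc : ContinuousOn Y (Icc t₀ t₁) := fun s hs => (hY s hs).continuousWithinAt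
  have hfc : ContinuousOn (fun r => X r / Y r) (Icc t₀ t₁) := hXc.div hYc hYne
  -- derivative of the integral
  have hI : ∀ s ∈ Icc t₀ t₁,
      HasDerivWithinAt (fun x => ∫ r in t₀..x, X r / Y r) (X s / Y s) (Icc t₀ t₁) s := by
    intro s hs
    haveI : Fact (s ∈ Icc t₀ t₁) := ⟨hs⟩
    apply integral_hasDerivWithinAt_right (t := Icc t₀ t₁)
    · exact (hfc.mono (uIcc_subset_Icc ht0 hs)).intervalIntegrable
    · exact AEStronglyMeasurable.stronglyMeasurableAtFilter_of_mem
        (hfc.aestronglyMeasurable measurableSet_Icc) self_mem_nhdsWithin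
    · exact hfc s hs
  -- Step 1: u s / X s - σ * (u s + v s) is constant
  have hF : ∀ s ∈ Icc t₀ t₁, u s / X s - σ * (u s + v s) = 1 / X t₀ := by
    have := const_of_deriv_zero (f := fun s => u s / X s - σ * (u s + v s)) (a := t₀) (b := t₁) ?_
    · intro s hs
      have := this s hs
      simpa [hu0, hv0] using this
    · intro s hs
      have h1 : HasDerivWithinAt (fun s => u s / X s)
          (((-γ * σ * (Y s * u s + X s * v s)) * X s - u s * (-γ * σ * X s * Y s)) / (X s)^2)
          (Icc t₀ t₁) s := (hu s hs).div (hX s hs) (hXne s hs)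
      have h2 : HasDerivWithinAt (fun s => σ * (u s + v s))
          (σ * ((-γ * σ * (Y s * u s + X s * v s)) +
            (γ * σ * Y s * u s + γ * (σ * X s - 1) * v s))) (Icc t₀ t₁) s :=
        ((hu s hs).add (hv s hs)).const_mul σ
      have h3 := h1.sub h2
      refine h3.congr_deriv (Eq.symm ?_)
      have hx := hXne s hs
      field_simp
      ring
  -- first integral: u s = σ * X s * (u s + v s) + X s / X t₀
  have hU : ∀ s ∈ Icc t₀ t₁, u s = σ * X s * (u s + v s) + X s / X t₀ := by
    intro s hs
    have h := hF s hs
    have hx := hXne s hs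
    field_simp at h ⊢
    linear_combination h
  -- Step 2: (u+v)/Y - (γ / X t₀) * ∫ is constant (= 0)
  have hW : ∀ s ∈ Icc t₀ t₁,
      u s + v s = γ * (Y s / X t₀) * ∫ r in t₀..s, X r / Y r := by
    have key := const_of_deriv_zero
      (f := fun s => (u s + v s) / Y s - (γ / X t₀) * ∫ r in t₀..s, X r / Y r)
      (a := t₀) (b := t₁) ?_
    · intro s hs
      have h := key s hs
      simp only [hu0, hv0, intervalIntegral.integral_same, mul_zero, sub_zero] at h
      have : (u s + v s) / Y s = (γ / X t₀) * ∫ r in t₀..s, X r / Y r := by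
        have : (1 : ℝ) + -1 = 0 := by norm_num
        rw [this, zero_div] at h
        linarith [h]
      have hy := hYne s hs
      rw [div_eq_iff hy] at this
      rw [this]; ring
    · intro s hs
      have h1 : HasDerivWithinAt (fun s => (u s + v s) / Y s)
          ((((-γ * σ * (Y s * u s + X s * v s)) +
              (γ * σ * Y s * u s + γ * (σ * X s - 1) * v s)) * Y s -
            (u s + v s) * (γ * σ * X s * Y s - γ * Y s)) / (Y s)^2)
          (Icc t₀ t₁) s := ((hu s hs).add (hv s hs)).div (hY s hs) (hYne s hs)
      have h2 : HasDerivWithinAt (fun s => (γ / X t₀) * ∫ r in t₀..s, X r / Y r)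
          ((γ / X t₀) * (X s / Y s)) (Icc t₀ t₁) s := (hI s hs).const_mul _
      have h3 := h1.sub h2
      refine h3.congr_deriv (Eq.symm ?_)
      have hy := hYne s hs
      have hx0 := hXne t₀ ht0
      have hx2 : u s - σ * X s * (u s + v s) = X s / X t₀ := by linarith [hU s hs]
      have key : (-γ * σ * (Y s * u s + X s * v s) +
            (γ * σ * Y s * u s + γ * (σ * X s - 1) * v s)) * Y s -
          (u s + v s) * (γ * σ * X s * Y s - γ * Y s) = γ * Y s * (X s / X t₀) := by
        rw [← hx2]; ring
      rw [key]
      field_simp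
      ring
  intro s hs
  have hw := hW s hs
  have hus := hU s hs
  obtain ⟨J, hJ⟩ : ∃ J, (∫ r in t₀..s, X r / Y r) = J := ⟨_, rfl⟩
  rw [hJ] at hw ⊢
  refine ⟨?_, ?_, hw⟩
  · linear_combination (1 + σ * X s) * hw - hw + hus
  · linear_combination (1 - σ * X s) * hw - hus
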